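/- arXiv:2305.01227 — 8 statements merged into one kernel-verified Lean document; each statement's English description precedes it below -/
import Mathlib

section
/- For the power distribution with cdf F(y) = y^θ on (0,1), θ > 0, and weight w(y) = y^m with m > 0, the general weighted extropy of minRSSU of size n equals -((n!)² θ^n / 2) ∏_{i=1}^n B((m+θ-1)/θ + 1, 2i-1), where B(a,b) is the Beta function. -/
open MeasureTheory

/-- Beta function B(a,b) = ∫₀¹ u^{a-1} (1-u)^{b-1} du. -/
noncomputable def betaFn (a b : ℝ) : ℝ :=
  ∫ u in Set.Ioo (0:ℝ) 1, u ^ (a - 1) * (1 - u) ^ (b - 1)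

/-- GWJ of minRSSU for the power distribution F(y)=y^θ on (0,1), w(y)=y^m:
the value is -((n!)² θ^n / 2) ∏_{i=1}^n B((m+θ-1)/θ + 1, 2i-1).
Here F⁻¹(u) = u^{1/θ} and f(y) = θ y^{θ-1}. -/
theorem gwj_minRSSU_power (θ m : ℝ) (hθ : 0 < θ) (hm : 0 < m) (n : ℕ) :
    -((n.factorial : ℝ) ^ 2 / 2) * ∏ i ∈ Finset.Icc 1 n,
        ∫ u in Set.Ioo (0:ℝ) 1,
          (1 - u) ^ (2 * i - 2) * ((u ^ (1/θ)) ^ m * (θ * (u ^ (1/θ)) ^ (θ - 1)))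
      = -((n.factorial : ℝ) ^ 2 * θ ^ n / 2) * ∏ i ∈ Finset.Icc 1 n,
        betaFn ((m + θ - 1) / θ + 1) (2 * (i:ℝ) - 1) := by
  have key : ∀ i ∈ Finset.Icc 1 n,
      (∫ u in Set.Ioo (0:ℝ) 1,
          (1 - u) ^ (2 * i - 2) * ((u ^ (1/θ)) ^ m * (θ * (u ^ (1/θ)) ^ (θ - 1))))
        = θ * betaFn ((m + θ - 1) / θ + 1) (2 * (i:ℝ) - 1) := by
    intro i hi
    have hi1 : 1 ≤ i := (Finset.mem_Icc.mp hi).1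
    rw [betaFn, ← MeasureTheory.integral_const_mul]
    apply setIntegral_congr_fun measurableSet_Ioo
    intro u hu
    simp only [Set.mem_Ioo] at hu
    have hu0 : (0:ℝ) < u := hu.1
    have e1 : ((2*i-2:ℕ):ℝ) = 2*(i:ℝ)-1-1 := by
      have h2 : 2 ≤ 2*i := by omega
      push_cast [Nat.cast_sub h2]
      ring
    have e2 : 1/θ*m + (1/θ*(θ-1)) = (m+θ-1)/θ+1-1 := by
      field_simp; ring
    have e3 : u^(1/θ*m) * u^(1/θ*(θ-1)) = u^((m+θ-1)/θ+1-1) := by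
      rw [← Real.rpow_add hu0, e2]
    calc (1-u) ^ (2*i-2) * ((u ^ (1/θ)) ^ m * (θ * (u ^ (1/θ)) ^ (θ - 1)))
        = (1-u)^(((2*i-2:ℕ):ℝ)) * ((u ^ (1/θ)) ^ m * (θ * (u ^ (1/θ)) ^ (θ - 1))) := by
          rw [Real.rpow_natCast]
      _ = θ * ((u^(1/θ*m) * u^(1/θ*(θ-1))) * (1-u)^(2*(i:ℝ)-1-1)) := by
          rw [e1, Real.rpow_mul hu0.le, Real.rpow_mul hu0.le]; ring
      _ = θ * (u^((m+θ-1)/θ+1-1) * (1-u)^(2*(i:ℝ)-1-1)) := by rw [e3]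
  rw [Finset.prod_congr rfl key, Finset.prod_mul_distrib, Finset.prod_const,
    Nat.card_Icc]
  simp only [Nat.add_sub_cancel]
  ring
end

section
/- For the exponential distribution with rate λ > 0 and weight w(x) = x^m, m > 0, the general weighted extropy of minRSSU of size n equals -(1/2) (1/λ^{m-1})^n (Γ(m+1)/2^{m+1})^n (1/n!)^{m-1}. -/
open MeasureTheory

lemma image_exp : (fun t : ℝ => 1 - Real.exp (-t)) '' Set.Ioi 0 = Set.Ioo (0:ℝ) 1 := by
  ext u
  constructor
  · rintro ⟨t, ht, rfl⟩
    have h1 : Real.exp (-t) < 1 := by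
      rw [Real.exp_lt_one_iff]; linarith [Set.mem_Ioi.mp ht]
    have h2 : 0 < Real.exp (-t) := Real.exp_pos _
    show (1 - Real.exp (-t)) ∈ Set.Ioo (0:ℝ) 1
    exact Set.mem_Ioo.mpr ⟨sub_pos.mpr h1, sub_lt_self 1 h2⟩
  · rintro ⟨h0, h1⟩
    refine ⟨-Real.log (1 - u), ?_, ?_⟩
    · simp only [Set.mem_Ioi]
      have : Real.log (1 - u) < 0 := Real.log_neg (by linarith) (by linarith)
      linarith
    · show 1 - Real.exp (-(-Real.log (1 - u))) = u
      rw [neg_neg, Real.exp_log (by linarith)]; ring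

lemma key (lam m : ℝ) (hlam : 0 < lam) (hm : 0 < m) (i : ℕ) (hi : 1 ≤ i) :
    (∫ u in Set.Ioo (0:ℝ) 1,
      (1 - u) ^ (2 * i - 2) * ((-Real.log (1 - u) / lam) ^ m * (lam * (1 - u))))
    = lam ^ (1 - m) * (Real.Gamma (m + 1) * (1 / (2 * (i:ℝ))) ^ (m + 1)) := by
  have hderiv : ∀ t ∈ Set.Ioi (0:ℝ),
      HasDerivWithinAt (fun t : ℝ => 1 - Real.exp (-t)) (Real.exp (-t)) (Set.Ioi 0) t := by
    intro t _
    have : HasDerivAt (fun t : ℝ => 1 - Real.exp (-t)) (Real.exp (-t)) t := by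
      have h := ((Real.hasDerivAt_exp (-t)).comp t (hasDerivAt_neg t)).const_sub 1
      simpa using h
    exact this.hasDerivWithinAt
  have hinj : Set.InjOn (fun t : ℝ => 1 - Real.exp (-t)) (Set.Ioi 0) := by
    intro a _ b _ h
    simp only [sub_right_inj, Real.exp_eq_exp, neg_inj] at h
    exact h
  rw [← image_exp, integral_image_eq_integral_abs_deriv_smul measurableSet_Ioi hderiv hinj]
  have hcongr : ∀ t ∈ Set.Ioi (0:ℝ),
      |Real.exp (-t)| • ((1 - (1 - Real.exp (-t))) ^ (2 * i - 2) *
        ((-Real.log (1 - (1 - Real.exp (-t))) / lam) ^ m * (lam * (1 - (1 - Real.exp (-t))))))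
      = lam ^ (1 - m) * (t ^ m * Real.exp (-(2 * (i:ℝ) * t))) := by
    intro t ht
    have ht' : (0:ℝ) < t := ht
    have he : 0 < Real.exp (-t) := Real.exp_pos _
    rw [abs_of_pos he, smul_eq_mul]
    simp only [sub_sub_cancel, Real.log_exp, neg_neg]
    rw [Real.div_rpow ht'.le hlam.le, ← Real.exp_nat_mul]
    rw [Real.rpow_sub hlam, Real.rpow_one]
    have hc : ((2 * i - 2 : ℕ) : ℝ) = 2 * (i:ℝ) - 2 := by
      push_cast [Nat.cast_sub (by omega : 2 ≤ 2 * i)]; ring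
    have hexp : Real.exp (-t) * Real.exp ((2*(i:ℝ)-2) * -t) * Real.exp (-t)
        = Real.exp (-(2*(i:ℝ)*t)) := by
      rw [← Real.exp_add, ← Real.exp_add]; congr 1; ring
    rw [hc, ← hexp]; ring
  rw [setIntegral_congr_fun measurableSet_Ioi hcongr, integral_const_mul]
  have h2i : (0:ℝ) < 2 * (i:ℝ) := by
    have : (1:ℝ) ≤ (i:ℝ) := by exact_mod_cast hi
    linarith
  have := Real.integral_rpow_mul_exp_neg_mul_Ioi (a := m + 1) (r := 2 * (i:ℝ)) (by linarith) h2i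
  simp only [add_sub_cancel_right] at this
  rw [this]; ring

lemma alg (L F G : ℝ) (hL : 0 < L) (hF : 0 < F) (m : ℝ) (n : ℕ) :
    -(F^2/2) * ((L^(1-m))^n * (G^n * (1/((2:ℝ)^n*F))^(m+1)))
    = -(1/2:ℝ) * (1/L^(m-1))^n * ((G/(2:ℝ)^(m+1))^n) * (1/F)^(m-1) := by
  have h2 : (0:ℝ) < 2 := by norm_num
  have h2n : (0:ℝ) < (2:ℝ)^n := by positivity
  simp only [one_div]
  rw [← Real.rpow_neg hL.le, neg_sub]
  rw [mul_inv, Real.mul_rpow (inv_nonneg.mpr h2n.le) (inv_nonneg.mpr hF.le)]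
  rw [Real.inv_rpow h2n.le, Real.inv_rpow hF.le, Real.inv_rpow hF.le]
  rw [← Real.rpow_natCast (2:ℝ) n, ← Real.rpow_mul h2.le, mul_comm (n:ℝ),
    Real.rpow_mul h2.le, Real.rpow_natCast]
  rw [← Real.rpow_neg hF.le (m+1), ← Real.rpow_neg hF.le (m-1), neg_sub]
  rw [div_pow]
  have hFe : F ^ (2:ℝ) * F ^ (-(m+1)) = F ^ (1-m) := by
    rw [← Real.rpow_add hF]; ring_nf
  have hF2 : F ^ (2:ℕ) = F ^ (2:ℝ) := by
    rw [← Real.rpow_natCast F 2]; norm_num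
  rw [hF2]
  linear_combination (-(1/2) * (L^(1-m))^n * G^n * (((2:ℝ)^(m+1))^n)⁻¹) * hFe

/-- GWJ of minRSSU for the exponential distribution with rate λ and weight
w(x) = x^m: the value is -(1/2)(1/λ^{m-1})^n (Γ(m+1)/2^{m+1})^n (1/n!)^{m-1}.
Here F⁻¹(u) = -log(1-u)/λ and f(F⁻¹(u)) = λ(1-u). -/
theorem gwj_minRSSU_exponential (lam m : ℝ) (hlam : 0 < lam) (hm : 0 < m) (n : ℕ) :
    -((n.factorial : ℝ) ^ 2 / 2) * ∏ i ∈ Finset.Icc 1 n,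
        ∫ u in Set.Ioo (0:ℝ) 1,
          (1 - u) ^ (2 * i - 2) * ((-Real.log (1 - u) / lam) ^ m * (lam * (1 - u)))
      = -(1/2 : ℝ) * (1 / lam ^ (m - 1)) ^ n *
          (Real.Gamma (m + 1) / (2:ℝ) ^ (m + 1)) ^ n *
          (1 / (n.factorial : ℝ)) ^ (m - 1) := by
  have hΓ : 0 < Real.Gamma (m + 1) := Real.Gamma_pos_of_pos (by linarith)
  have hF : (0:ℝ) < n.factorial := by exact_mod_cast n.factorial_pos
  rw [Finset.prod_congr rfl (fun i hi => key lam m hlam hm i (Finset.mem_Icc.mp hi).1)]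
  have hcard : (Finset.Icc 1 n).card = n := by rw [Nat.card_Icc]; omega
  have hprodinv : ∏ i ∈ Finset.Icc 1 n, (1 / (2 * (i:ℝ))) = 1 / ((2:ℝ)^n * n.factorial) := by
    simp only [one_div]
    rw [Finset.prod_inv_distrib]
    congr 1
    rw [Finset.prod_mul_distrib, Finset.prod_const, hcard]
    congr 1
    rw [← Nat.cast_prod]
    norm_cast
    rw [← Finset.Ico_add_one_right_eq_Icc]
    exact Finset.prod_Ico_id_eq_factorial n
  rw [Finset.prod_mul_distrib, Finset.prod_const, hcard, Finset.prod_mul_distrib,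
    Finset.prod_const, hcard,
    Real.finset_prod_rpow _ _ (fun i hi => by positivity) (m+1), hprodinv]
  exact alg lam (n.factorial : ℝ) (Real.Gamma (m+1)) hlam hF m n
end

section
/- For the uniform distribution on (0,1) with weight w(x) = x^m, m > 0, the general weighted extropy of minRSSU of size n equals -((n!)²/2) ∏_{i=1}^n B(m+1, 2i-1), and that of maxRSSU equals -((n!)²/2) ∏_{i=1}^n 1/(m + 2i - 1). -/
open MeasureTheory

/-- GWJ of minRSSU and maxRSSU for the uniform distribution on (0,1) with
weight w(x)=x^m: here Λ^w(u) = w(F⁻¹(u)) f(F⁻¹(u)) = u^m, and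
J^w(minRSSU) = -((n!)²/2)∏ B(m+1, 2i-1), J^w(maxRSSU) = -((n!)²/2)∏ 1/(m+2i-1). -/
theorem gwj_uniform (m : ℝ) (hm : 0 < m) (n : ℕ) :
    (-((n.factorial : ℝ) ^ 2 / 2) * ∏ i ∈ Finset.Icc 1 n,
        ∫ u in Set.Ioo (0:ℝ) 1, (1 - u) ^ (2 * i - 2) * u ^ m
      = -((n.factorial : ℝ) ^ 2 / 2) * ∏ i ∈ Finset.Icc 1 n,
          betaFn (m + 1) (2 * (i:ℝ) - 1))
    ∧
    (-((n.factorial : ℝ) ^ 2 / 2) * ∏ i ∈ Finset.Icc 1 n,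
        ∫ u in Set.Ioo (0:ℝ) 1, u ^ (2 * i - 2) * u ^ m
      = -((n.factorial : ℝ) ^ 2 / 2) * ∏ i ∈ Finset.Icc 1 n,
          1 / (m + 2 * (i:ℝ) - 1)) := by
  constructor
  · congr 1
    apply Finset.prod_congr rfl
    intro i hi
    rw [Finset.mem_Icc] at hi
    unfold betaFn
    apply setIntegral_congr_fun measurableSet_Ioo
    intro u hu
    dsimp only
    have hc : ((2 * i - 2 : ℕ) : ℝ) = 2 * (i:ℝ) - 1 - 1 := by
      rw [Nat.cast_sub (by omega)]; push_cast; ring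
    rw [show (m + 1 - 1 : ℝ) = m by ring, ← hc, Real.rpow_natCast]
    ring
  · congr 1
    apply Finset.prod_congr rfl
    intro i hi
    rw [Finset.mem_Icc] at hi
    have hr : (-1 : ℝ) < m + ((2 * i - 2 : ℕ) : ℝ) := by
      have : (0:ℝ) ≤ ((2 * i - 2 : ℕ) : ℝ) := Nat.cast_nonneg _
      linarith
    have h1 : (∫ u in Set.Ioo (0:ℝ) 1, u ^ (2 * i - 2) * u ^ m)
        = ∫ u in Set.Ioo (0:ℝ) 1, u ^ (m + ((2 * i - 2 : ℕ) : ℝ)) := by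
      apply setIntegral_congr_fun measurableSet_Ioo
      intro u hu
      dsimp only
      rw [← Real.rpow_natCast u (2*i-2), ← Real.rpow_add hu.1]
      ring_nf
    rw [h1, ← integral_Ioc_eq_integral_Ioo,
      ← intervalIntegral.integral_of_le (by norm_num : (0:ℝ) ≤ 1),
      integral_rpow (Or.inl hr)]
    rw [Real.one_rpow, Real.zero_rpow (by linarith)]
    rw [Nat.cast_sub (by omega)]
    push_cast
    rw [show m + (2 * (i:ℝ) - 2) + 1 = m + 2 * (i:ℝ) - 1 by ring]
    ring
end

section
/- Let φ be an increasing differentiable function with φ(0) = 0 and w(φ(x))/φ'(x) ≤ w(x) for all x ≥ 0. If Z = φ(X), then J^w(X_minRSSU^(n)) ≤ J^w(Z_minRSSU^(n)) and J^w(X_maxRSSU^(n)) ≤ J^w(Z_maxRSSU^(n)). -/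
open MeasureTheory


lemma gwj_aux (n : ℕ) (ΛX ΛZ : ℝ → ℝ) (g : ℕ → ℝ → ℝ) (c : ℝ) (hc : 0 ≤ c)
    (hgm : ∀ i, Measurable (g i))
    (hg0 : ∀ i, ∀ u ∈ Set.Ioo (0:ℝ) 1, 0 ≤ g i u)
    (hg1 : ∀ i, ∀ u ∈ Set.Ioo (0:ℝ) 1, g i u ≤ 1)
    (hZ0 : ∀ u ∈ Set.Ioo (0:ℝ) 1, 0 ≤ ΛZ u)
    (hX0 : ∀ u ∈ Set.Ioo (0:ℝ) 1, 0 ≤ ΛX u)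
    (hZX : ∀ u ∈ Set.Ioo (0:ℝ) 1, ΛZ u ≤ ΛX u)
    (hmX : Measurable ΛX) (hmZ : Measurable ΛZ)
    (hintX : IntegrableOn ΛX (Set.Ioo (0:ℝ) 1)) :
    -c * ∏ i ∈ Finset.Icc 1 n, ∫ u in Set.Ioo (0:ℝ) 1, g i u * ΛX u
      ≤ -c * ∏ i ∈ Finset.Icc 1 n, ∫ u in Set.Ioo (0:ℝ) 1, g i u * ΛZ u := by
  have hae : ∀ᵐ u ∂(volume.restrict (Set.Ioo (0:ℝ) 1)), u ∈ Set.Ioo (0:ℝ) 1 :=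
    ae_restrict_mem measurableSet_Ioo
  have hintZ : ∀ i, IntegrableOn (fun u => g i u * ΛZ u) (Set.Ioo (0:ℝ) 1) := by
    intro i
    refine hintX.mono' ((hgm i).mul hmZ).aestronglyMeasurable ?_
    filter_upwards [hae] with u hu
    rw [Real.norm_eq_abs, abs_of_nonneg (mul_nonneg (hg0 i u hu) (hZ0 u hu))]
    calc g i u * ΛZ u ≤ 1 * ΛX u :=
          mul_le_mul (hg1 i u hu) (hZX u hu) (hZ0 u hu) zero_le_one
      _ = ΛX u := one_mul _
  have hintX' : ∀ i, IntegrableOn (fun u => g i u * ΛX u) (Set.Ioo (0:ℝ) 1) := by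
    intro i
    refine hintX.mono' ((hgm i).mul hmX).aestronglyMeasurable ?_
    filter_upwards [hae] with u hu
    rw [Real.norm_eq_abs, abs_of_nonneg (mul_nonneg (hg0 i u hu) (hX0 u hu))]
    calc g i u * ΛX u ≤ 1 * ΛX u :=
          mul_le_mul_of_nonneg_right (hg1 i u hu) (hX0 u hu)
      _ = ΛX u := one_mul _
  have hprod : ∏ i ∈ Finset.Icc 1 n, ∫ u in Set.Ioo (0:ℝ) 1, g i u * ΛZ u
      ≤ ∏ i ∈ Finset.Icc 1 n, ∫ u in Set.Ioo (0:ℝ) 1, g i u * ΛX u := by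
    refine Finset.prod_le_prod (fun i _ => ?_) (fun i _ => ?_)
    · exact setIntegral_nonneg measurableSet_Ioo
        (fun u hu => mul_nonneg (hg0 i u hu) (hZ0 u hu))
    · exact setIntegral_mono_on (hintZ i) (hintX' i) measurableSet_Ioo
        (fun u hu => mul_le_mul_of_nonneg_left (hZX u hu) (hg0 i u hu))
  have := mul_le_mul_of_nonpos_left hprod (neg_nonpos.mpr hc)
  linarith

/-- If φ is increasing with φ(0)=0 and w(φ(x))/φ'(x) ≤ w(x) for x ≥ 0, and
Z = φ(X) (so Λ_Z(u) = w(φ(F⁻¹(u))) f(F⁻¹(u))/φ'(F⁻¹(u))), then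
J^w(X_minRSSU^(n)) ≤ J^w(Z_minRSSU^(n)) and J^w(X_maxRSSU^(n)) ≤ J^w(Z_maxRSSU^(n)). -/

theorem gwj_increasing_transform
    (n : ℕ) (f Finv w phi dphi : ℝ → ℝ)
    (hf0 : ∀ x, 0 ≤ f x) (hw : ∀ x, 0 ≤ w x)
    (hderiv : ∀ x, HasDerivAt phi (dphi x) x)
    (hphimono : StrictMono phi) (hdpos : ∀ x, 0 < dphi x) (hphi0 : phi 0 = 0)
    (hwphi : ∀ x, 0 ≤ x → w (phi x) / dphi x ≤ w x)
    (hFinv : ∀ u ∈ Set.Ioo (0:ℝ) 1, 0 ≤ Finv u)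
    (hmeasX : Measurable fun u => w (Finv u) * f (Finv u))
    (hmeasZ : Measurable fun u => w (phi (Finv u)) * (f (Finv u) / dphi (Finv u)))
    (hintX : IntegrableOn (fun u => w (Finv u) * f (Finv u)) (Set.Ioo (0:ℝ) 1)) :
    (-((n.factorial : ℝ) ^ 2 / 2) * ∏ i ∈ Finset.Icc 1 n,
        ∫ u in Set.Ioo (0:ℝ) 1, (1 - u) ^ (2 * i - 2) * (w (Finv u) * f (Finv u))
      ≤ -((n.factorial : ℝ) ^ 2 / 2) * ∏ i ∈ Finset.Icc 1 n,
        ∫ u in Set.Ioo (0:ℝ) 1,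
          (1 - u) ^ (2 * i - 2) * (w (phi (Finv u)) * (f (Finv u) / dphi (Finv u))))
    ∧
    (-((n.factorial : ℝ) ^ 2 / 2) * ∏ i ∈ Finset.Icc 1 n,
        ∫ u in Set.Ioo (0:ℝ) 1, u ^ (2 * i - 2) * (w (Finv u) * f (Finv u))
      ≤ -((n.factorial : ℝ) ^ 2 / 2) * ∏ i ∈ Finset.Icc 1 n,
        ∫ u in Set.Ioo (0:ℝ) 1,
          u ^ (2 * i - 2) * (w (phi (Finv u)) * (f (Finv u) / dphi (Finv u)))) := by

  have hc : (0:ℝ) ≤ (n.factorial : ℝ) ^ 2 / 2 := by positivity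
  have hZ0 : ∀ u ∈ Set.Ioo (0:ℝ) 1,
      0 ≤ w (phi (Finv u)) * (f (Finv u) / dphi (Finv u)) := fun u _ =>
    mul_nonneg (hw _) (div_nonneg (hf0 _) (hdpos _).le)
  have hX0 : ∀ u ∈ Set.Ioo (0:ℝ) 1, 0 ≤ w (Finv u) * f (Finv u) := fun u _ =>
    mul_nonneg (hw _) (hf0 _)
  have hZX : ∀ u ∈ Set.Ioo (0:ℝ) 1,
      w (phi (Finv u)) * (f (Finv u) / dphi (Finv u)) ≤ w (Finv u) * f (Finv u) := by
    intro u hu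
    have hx := hFinv u hu
    calc w (phi (Finv u)) * (f (Finv u) / dphi (Finv u))
        = (w (phi (Finv u)) / dphi (Finv u)) * f (Finv u) := by ring
      _ ≤ w (Finv u) * f (Finv u) :=
          mul_le_mul_of_nonneg_right (hwphi _ hx) (hf0 _)
  constructor
  · exact gwj_aux n _ _ (fun i u => (1 - u) ^ (2 * i - 2)) _ hc
      (fun i => (measurable_const.sub measurable_id).pow_const _)
      (fun i u hu => pow_nonneg (by linarith [hu.2]) _)
      (fun i u hu => pow_le_one₀ (by linarith [hu.2]) (by linarith [hu.1]))
      hZ0 hX0 hZX hmeasX hmeasZ hintX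
  · exact gwj_aux n _ _ (fun i u => u ^ (2 * i - 2)) _ hc
      (fun i => measurable_id.pow_const _)
      (fun i u hu => pow_nonneg hu.1.le _)
      (fun i u hu => pow_le_one₀ hu.1.le hu.2.le)
      hZ0 hX0 hZX hmeasX hmeasZ hintX
end

section
/- If w is increasing and X ≤_disp Y, then J^w(X_minRSSU^(n)) ≤ J^w(Y_minRSSU^(n)) and J^w(X_maxRSSU^(n)) ≤ J^w(Y_maxRSSU^(n)). -/
open MeasureTheory

/-- If w is increasing and X ≤_disp Y (so f(F⁻¹(u)) ≥ g(G⁻¹(u)) and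
F⁻¹(u) ≥ G⁻¹(u) for u ∈ (0,1)), then J^w(X_minRSSU^(n)) ≤ J^w(Y_minRSSU^(n))
and J^w(X_maxRSSU^(n)) ≤ J^w(Y_maxRSSU^(n)). -/
theorem gwj_disp_compare
    (n : ℕ) (f g Finv Ginv w : ℝ → ℝ)
    (hf0 : ∀ x, 0 ≤ f x) (hg0 : ∀ x, 0 ≤ g x)
    (hwmono : Monotone w) (hw0 : ∀ x, 0 ≤ w x)
    (hdisp : ∀ u ∈ Set.Ioo (0:ℝ) 1, g (Ginv u) ≤ f (Finv u))
    (hst : ∀ u ∈ Set.Ioo (0:ℝ) 1, Ginv u ≤ Finv u)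
    (hmeasX : Measurable fun u => w (Finv u) * f (Finv u))
    (hmeasY : Measurable fun u => w (Ginv u) * g (Ginv u))
    (hintX : IntegrableOn (fun u => w (Finv u) * f (Finv u)) (Set.Ioo (0:ℝ) 1)) :
    (-((n.factorial : ℝ) ^ 2 / 2) * ∏ i ∈ Finset.Icc 1 n,
        ∫ u in Set.Ioo (0:ℝ) 1, (1 - u) ^ (2 * i - 2) * (w (Finv u) * f (Finv u))
      ≤ -((n.factorial : ℝ) ^ 2 / 2) * ∏ i ∈ Finset.Icc 1 n,
        ∫ u in Set.Ioo (0:ℝ) 1, (1 - u) ^ (2 * i - 2) * (w (Ginv u) * g (Ginv u)))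
    ∧
    (-((n.factorial : ℝ) ^ 2 / 2) * ∏ i ∈ Finset.Icc 1 n,
        ∫ u in Set.Ioo (0:ℝ) 1, u ^ (2 * i - 2) * (w (Finv u) * f (Finv u))
      ≤ -((n.factorial : ℝ) ^ 2 / 2) * ∏ i ∈ Finset.Icc 1 n,
        ∫ u in Set.Ioo (0:ℝ) 1, u ^ (2 * i - 2) * (w (Ginv u) * g (Ginv u))) := by
  have hXY : ∀ u ∈ Set.Ioo (0:ℝ) 1, w (Ginv u) * g (Ginv u) ≤ w (Finv u) * f (Finv u) :=
    fun u hu => mul_le_mul (hwmono (hst u hu)) (hdisp u hu) (hg0 _) (hw0 _)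
  have key : ∀ p : ℝ → ℝ, Measurable p → (∀ u ∈ Set.Ioo (0:ℝ) 1, 0 ≤ p u ∧ p u ≤ 1) →
      (0 ≤ ∫ u in Set.Ioo (0:ℝ) 1, p u * (w (Ginv u) * g (Ginv u)) ∧
       ∫ u in Set.Ioo (0:ℝ) 1, p u * (w (Ginv u) * g (Ginv u)) ≤
       ∫ u in Set.Ioo (0:ℝ) 1, p u * (w (Finv u) * f (Finv u))) := by
    intro p hp hpb
    have hintX' : IntegrableOn (fun u => p u * (w (Finv u) * f (Finv u))) (Set.Ioo 0 1) := by
      refine Integrable.mono hintX (hp.mul hmeasX).aestronglyMeasurable ?_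
      filter_upwards [ae_restrict_mem measurableSet_Ioo] with u hu
      have hb := hpb u hu
      rw [norm_mul]
      exact mul_le_of_le_one_left (norm_nonneg _)
        (by rw [Real.norm_eq_abs, abs_of_nonneg hb.1]; exact hb.2)
    have hintY' : IntegrableOn (fun u => p u * (w (Ginv u) * g (Ginv u))) (Set.Ioo 0 1) := by
      refine Integrable.mono hintX' (hp.mul hmeasY).aestronglyMeasurable ?_
      filter_upwards [ae_restrict_mem measurableSet_Ioo] with u hu
      have hb := hpb u hu
      rw [Real.norm_eq_abs, Real.norm_eq_abs,
        abs_of_nonneg (mul_nonneg hb.1 (mul_nonneg (hw0 _) (hg0 _))),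
        abs_of_nonneg (mul_nonneg hb.1 (mul_nonneg (hw0 _) (hf0 _)))]
      exact mul_le_mul_of_nonneg_left (hXY u hu) hb.1
    constructor
    · exact setIntegral_nonneg measurableSet_Ioo
        (fun u hu => mul_nonneg (hpb u hu).1 (mul_nonneg (hw0 _) (hg0 _)))
    · exact setIntegral_mono_on hintY' hintX' measurableSet_Ioo
        (fun u hu => mul_le_mul_of_nonneg_left (hXY u hu) (hpb u hu).1)
  have hc : -((n.factorial : ℝ) ^ 2 / 2) ≤ 0 := neg_nonpos.mpr (by positivity)
  constructor
  · refine mul_le_mul_of_nonpos_left ?_ hc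
    refine Finset.prod_le_prod (fun i _ => ?_) (fun i _ => ?_)
    · exact (key (fun u => (1 - u) ^ (2 * i - 2))
        ((measurable_const.sub measurable_id).pow_const _)
        (fun u hu => ⟨pow_nonneg (by linarith [hu.2]) _,
          pow_le_one₀ (by linarith [hu.2]) (by linarith [hu.1])⟩)).1
    · exact (key (fun u => (1 - u) ^ (2 * i - 2))
        ((measurable_const.sub measurable_id).pow_const _)
        (fun u hu => ⟨pow_nonneg (by linarith [hu.2]) _,
          pow_le_one₀ (by linarith [hu.2]) (by linarith [hu.1])⟩)).2
  · refine mul_le_mul_of_nonpos_left ?_ hc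
    refine Finset.prod_le_prod (fun i _ => ?_) (fun i _ => ?_)
    · exact (key (fun u => u ^ (2 * i - 2)) (measurable_id.pow_const _)
        (fun u hu => ⟨pow_nonneg hu.1.le _, pow_le_one₀ hu.1.le hu.2.le⟩)).1
    · exact (key (fun u => u ^ (2 * i - 2)) (measurable_id.pow_const _)
        (fun u hu => ⟨pow_nonneg hu.1.le _, pow_le_one₀ hu.1.le hu.2.le⟩)).2
end

section
/- If w(F⁻¹(u)) f(F⁻¹(u)) ≥ 1 for all u ∈ (0,1), then J^w(X_minRSSU^(n)) is decreasing in n ≥ 1, and likewise J^w(X_maxRSSU^(n)) is decreasing in n ≥ 1. -/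
open MeasureTheory

lemma integral_pow_Ioo (k : ℕ) : ∫ u in Set.Ioo (0:ℝ) 1, u ^ k = 1/(k+1) := by
  rw [← MeasureTheory.integral_Ioc_eq_integral_Ioo,
    ← intervalIntegral.integral_of_le (by norm_num : (0:ℝ) ≤ 1)]
  simpa using integral_pow k

lemma integral_one_sub_pow_Ioo (k : ℕ) :
    ∫ u in Set.Ioo (0:ℝ) 1, (1 - u) ^ k = 1/(k+1) := by
  rw [← MeasureTheory.integral_Ioc_eq_integral_Ioo,
    ← intervalIntegral.integral_of_le (by norm_num : (0:ℝ) ≤ 1)]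
  rw [show (∫ u in (0:ℝ)..1, (1-u)^k) = ∫ u in (0:ℝ)..1, (fun x => x^k) (1 - u) from rfl]
  rw [intervalIntegral.integral_comp_sub_left (fun x => x^k) 1]
  simpa using integral_pow k

lemma key_mono (Λ : ℝ → ℝ) (hL : ∀ u ∈ Set.Ioo (0:ℝ) 1, 1 ≤ Λ u)
    (hmeas : Measurable Λ) (hint : IntegrableOn Λ (Set.Ioo (0:ℝ) 1))
    (g : ℝ → ℝ) (hg : Continuous g)
    (hg0 : ∀ u ∈ Set.Ioo (0:ℝ) 1, 0 ≤ g u) (hg1 : ∀ u ∈ Set.Ioo (0:ℝ) 1, g u ≤ 1) :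
    ∫ u in Set.Ioo (0:ℝ) 1, g u ≤ ∫ u in Set.Ioo (0:ℝ) 1, g u * Λ u := by
  have hgint : IntegrableOn g (Set.Ioo (0:ℝ) 1) :=
    (hg.integrableOn_Icc (a := 0) (b := 1)).mono_set Set.Ioo_subset_Icc_self
  have hgΛ : IntegrableOn (fun u => g u * Λ u) (Set.Ioo (0:ℝ) 1) := by
    refine hint.mono' ((hg.measurable.mul hmeas).aestronglyMeasurable) ?_
    filter_upwards [ae_restrict_mem measurableSet_Ioo] with u hu
    have h0 := hg0 u hu; have h1 := hg1 u hu; have hΛ := hL u hu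
    rw [Real.norm_eq_abs, abs_mul, abs_of_nonneg h0]
    calc g u * |Λ u| ≤ 1 * |Λ u| :=
          mul_le_mul_of_nonneg_right h1 (abs_nonneg _)
      _ = Λ u := by rw [one_mul, abs_of_nonneg (le_trans zero_le_one hΛ)]
  refine setIntegral_mono_on hgint hgΛ measurableSet_Ioo ?_
  intro u hu
  have h0 := hg0 u hu; have hΛ := hL u hu
  calc g u = g u * 1 := (mul_one _).symm
    _ ≤ g u * Λ u := mul_le_mul_of_nonneg_left hΛ h0

lemma factor_ge_one (Λ : ℝ → ℝ) (hL : ∀ u ∈ Set.Ioo (0:ℝ) 1, 1 ≤ Λ u)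
    (hmeas : Measurable Λ) (hint : IntegrableOn Λ (Set.Ioo (0:ℝ) 1))
    (i : ℕ) (hi : 1 ≤ i) (g : ℝ → ℝ) (hg : Continuous g)
    (hg0 : ∀ u ∈ Set.Ioo (0:ℝ) 1, 0 ≤ g u) (hg1 : ∀ u ∈ Set.Ioo (0:ℝ) 1, g u ≤ 1)
    (hgval : (∫ u in Set.Ioo (0:ℝ) 1, g u) = 1/(2*i-1 : ℕ)) :
    1 ≤ (i:ℝ)^2 * ∫ u in Set.Ioo (0:ℝ) 1, g u * Λ u := by
  have h1 := key_mono Λ hL hmeas hint g hg hg0 hg1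
  rw [hgval] at h1
  have hcast : ((2*i-1 : ℕ) : ℝ) = 2*(i:ℝ) - 1 := by
    rw [Nat.cast_sub (by omega)]; push_cast; ring
  have hi1 : (1:ℝ) ≤ (i:ℝ) := by exact_mod_cast hi
  have hkpos : (0:ℝ) < (2*i-1 : ℕ) := by rw [hcast]; linarith
  have h2 : ((2*i-1 : ℕ) : ℝ) ≤ (i:ℝ)^2 := by
    rw [hcast]; nlinarith [sq_nonneg ((i:ℝ) - 1)]
  calc (1:ℝ) = ((2*i-1 : ℕ):ℝ) * (1/(2*i-1:ℕ)) := by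
        rw [mul_one_div, div_self (ne_of_gt hkpos)]
    _ ≤ (i:ℝ)^2 * (1/(2*i-1:ℕ)) :=
        mul_le_mul_of_nonneg_right h2 (by positivity)
    _ ≤ (i:ℝ)^2 * ∫ u in Set.Ioo (0:ℝ) 1, g u * Λ u :=
        mul_le_mul_of_nonneg_left h1 (by positivity)

lemma prod_icc_mono (a : ℕ → ℝ) (ha : ∀ i, 1 ≤ i → 1 ≤ a i)
    (m n : ℕ) (hm : 1 ≤ m) (hmn : m ≤ n) :
    ∏ i ∈ Finset.Icc 1 m, a i ≤ ∏ i ∈ Finset.Icc 1 n, a i := by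
  have hu : Finset.Icc 1 m ∪ Finset.Ioc m n = Finset.Icc 1 n := by
    ext x
    simp only [Finset.mem_union, Finset.mem_Icc, Finset.mem_Ioc]
    omega
  rw [← hu, Finset.prod_union (by
    rw [Finset.disjoint_left]
    intro x hx hx'
    simp only [Finset.mem_Icc, Finset.mem_Ioc] at hx hx'
    omega)]
  have h1 : (1:ℝ) ≤ ∏ i ∈ Finset.Ioc m n, a i := by
    calc (1:ℝ) = ∏ _i ∈ Finset.Ioc m n, (1:ℝ) := by rw [Finset.prod_const_one]
      _ ≤ ∏ i ∈ Finset.Ioc m n, a i := by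
          apply Finset.prod_le_prod (fun _ _ => zero_le_one)
          intro i hi
          exact ha i (by have := (Finset.mem_Ioc.mp hi).1; omega)
  have h0 : (0:ℝ) ≤ ∏ i ∈ Finset.Icc 1 m, a i :=
    Finset.prod_nonneg fun i hi =>
      le_trans zero_le_one (ha i (Finset.mem_Icc.mp hi).1)
  exact le_mul_of_one_le_right h0 h1

/-- If Λ(u) = w(F⁻¹(u)) f(F⁻¹(u)) ≥ 1 on (0,1), then J^w(X_minRSSU^(n)) and
J^w(X_maxRSSU^(n)) are decreasing in n ≥ 1, where
J^w(X_minRSSU^(n)) = -(1/2)∏_{i=1}^n i² ∫₀¹ (1-u)^{2i-2} Λ(u) du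
(and with u^{2i-2} for maxRSSU). -/
theorem gwj_monotone_in_n
    (f Finv w : ℝ → ℝ)
    (hL : ∀ u ∈ Set.Ioo (0:ℝ) 1, 1 ≤ w (Finv u) * f (Finv u))
    (hmeas : Measurable fun u => w (Finv u) * f (Finv u))
    (hint : IntegrableOn (fun u => w (Finv u) * f (Finv u)) (Set.Ioo (0:ℝ) 1)) :
    AntitoneOn (fun n : ℕ => -(1/2 : ℝ) * ∏ i ∈ Finset.Icc 1 n,
        ((i:ℝ) ^ 2 * ∫ u in Set.Ioo (0:ℝ) 1,
          (1 - u) ^ (2 * i - 2) * (w (Finv u) * f (Finv u)))) (Set.Ici 1)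
    ∧
    AntitoneOn (fun n : ℕ => -(1/2 : ℝ) * ∏ i ∈ Finset.Icc 1 n,
        ((i:ℝ) ^ 2 * ∫ u in Set.Ioo (0:ℝ) 1,
          u ^ (2 * i - 2) * (w (Finv u) * f (Finv u)))) (Set.Ici 1) := by
  set Λ : ℝ → ℝ := fun u => w (Finv u) * f (Finv u) with hΛdef
  have hfac1 : ∀ i : ℕ, 1 ≤ i →
      1 ≤ (i:ℝ)^2 * ∫ u in Set.Ioo (0:ℝ) 1, (1-u)^(2*i-2) * Λ u := by
    intro i hi
    refine factor_ge_one Λ hL hmeas hint i hi _ (by continuity) ?_ ?_ ?_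
    · intro u hu; exact pow_nonneg (by linarith [hu.2]) _
    · intro u hu
      exact pow_le_one₀ (by linarith [hu.2]) (by linarith [hu.1])
    · rw [integral_one_sub_pow_Ioo]
      congr 1
      norm_cast
      omega
  have hfac2 : ∀ i : ℕ, 1 ≤ i →
      1 ≤ (i:ℝ)^2 * ∫ u in Set.Ioo (0:ℝ) 1, u^(2*i-2) * Λ u := by
    intro i hi
    refine factor_ge_one Λ hL hmeas hint i hi _ (by continuity) ?_ ?_ ?_
    · intro u hu; exact pow_nonneg (le_of_lt hu.1) _
    · intro u hu
      exact pow_le_one₀ (le_of_lt hu.1) (le_of_lt hu.2)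
    · rw [integral_pow_Ioo]
      congr 1
      norm_cast
      omega
  constructor <;>
  · intro m hm n hn hmn
    simp only
    rw [neg_mul, neg_mul, neg_le_neg_iff]
    apply mul_le_mul_of_nonneg_left _ (by norm_num : (0:ℝ) ≤ 1/2)
    first
      | exact prod_icc_mono _ (fun i hi => hfac1 i hi) m n hm hmn
      | exact prod_icc_mono _ (fun i hi => hfac2 i hi) m n hm hmn
end

section
/- J^w(X_minRSSU^(n)) ≥ (n!)² J^w(X_SRS^(n)) and J^w(X_maxRSSU^(n)) ≥ (n!)² J^w(X_SRS^(n)), where J^w(X_SRS^(n)) = -(1/2)(∫₀¹ w(F⁻¹(u)) f(F⁻¹(u)) du)^n. -/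
open MeasureTheory

lemma gwj_key (Λ g : ℝ → ℝ) (hΛ : ∀ u, 0 ≤ Λ u) (hm : Measurable Λ)
    (hg : Measurable g) (hg01 : ∀ u ∈ Set.Ioo (0:ℝ) 1, 0 ≤ g u ∧ g u ≤ 1)
    (hint : IntegrableOn Λ (Set.Ioo (0:ℝ) 1)) :
    0 ≤ (∫ u in Set.Ioo (0:ℝ) 1, g u * Λ u) ∧
      (∫ u in Set.Ioo (0:ℝ) 1, g u * Λ u) ≤ ∫ u in Set.Ioo (0:ℝ) 1, Λ u := by
  have hintg : IntegrableOn (fun u => g u * Λ u) (Set.Ioo (0:ℝ) 1) := by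
    refine hint.mono' ((hg.mul hm).aestronglyMeasurable) ?_
    refine (ae_restrict_iff' measurableSet_Ioo).2 (ae_of_all _ fun u hu => ?_)
    obtain ⟨h0, h1⟩ := hg01 u hu
    rw [Real.norm_eq_abs, abs_of_nonneg (mul_nonneg h0 (hΛ u))]
    calc g u * Λ u ≤ 1 * Λ u := mul_le_mul_of_nonneg_right h1 (hΛ u)
    _ = Λ u := one_mul _
  constructor
  · refine setIntegral_nonneg measurableSet_Ioo fun u hu => ?_
    exact mul_nonneg (hg01 u hu).1 (hΛ u)
  · refine setIntegral_mono_on hintg hint measurableSet_Ioo fun u hu => ?_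
    calc g u * Λ u ≤ 1 * Λ u := mul_le_mul_of_nonneg_right (hg01 u hu).2 (hΛ u)
    _ = Λ u := one_mul _

/-- J^w(X_minRSSU^(n)) ≥ (n!)² J^w(X_SRS^(n)) and
J^w(X_maxRSSU^(n)) ≥ (n!)² J^w(X_SRS^(n)), where
J^w(X_SRS^(n)) = -(1/2)(∫₀¹ w(F⁻¹(u)) f(F⁻¹(u)) du)^n. -/
theorem gwj_rssu_vs_srs
    (n : ℕ) (f Finv w : ℝ → ℝ)
    (hf0 : ∀ x, 0 ≤ f x) (hw0 : ∀ x, 0 ≤ w x)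
    (hmeas : Measurable fun u => w (Finv u) * f (Finv u))
    (hint : IntegrableOn (fun u => w (Finv u) * f (Finv u)) (Set.Ioo (0:ℝ) 1)) :
    (-((n.factorial : ℝ) ^ 2 / 2) * ∏ i ∈ Finset.Icc 1 n,
        ∫ u in Set.Ioo (0:ℝ) 1, (1 - u) ^ (2 * i - 2) * (w (Finv u) * f (Finv u))
      ≥ (n.factorial : ℝ) ^ 2 *
        (-(1/2 : ℝ) * (∫ u in Set.Ioo (0:ℝ) 1, w (Finv u) * f (Finv u)) ^ n))
    ∧
    (-((n.factorial : ℝ) ^ 2 / 2) * ∏ i ∈ Finset.Icc 1 n,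
        ∫ u in Set.Ioo (0:ℝ) 1, u ^ (2 * i - 2) * (w (Finv u) * f (Finv u))
      ≥ (n.factorial : ℝ) ^ 2 *
        (-(1/2 : ℝ) * (∫ u in Set.Ioo (0:ℝ) 1, w (Finv u) * f (Finv u)) ^ n)) := by
  set Λ : ℝ → ℝ := fun u => w (Finv u) * f (Finv u) with hΛdef
  have hΛ : ∀ u, 0 ≤ Λ u := fun u => mul_nonneg (hw0 _) (hf0 _)
  set J : ℝ := ∫ u in Set.Ioo (0:ℝ) 1, Λ u with hJ
  have hkey : ∀ (g : ℝ → ℝ), Measurable g → (∀ u ∈ Set.Ioo (0:ℝ) 1, 0 ≤ g u ∧ g u ≤ 1) →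
      0 ≤ (∫ u in Set.Ioo (0:ℝ) 1, g u * Λ u) ∧
        (∫ u in Set.Ioo (0:ℝ) 1, g u * Λ u) ≤ J :=
    fun g hg hg01 => gwj_key Λ g hΛ hmeas hg hg01 hint
  have hN : (0:ℝ) ≤ (n.factorial : ℝ) ^ 2 / 2 := by positivity
  have main : ∀ (G : ℕ → ℝ → ℝ), (∀ i, Measurable (G i)) →
      (∀ i, ∀ u ∈ Set.Ioo (0:ℝ) 1, 0 ≤ G i u ∧ G i u ≤ 1) →
      -((n.factorial : ℝ) ^ 2 / 2) * ∏ i ∈ Finset.Icc 1 n,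
          ∫ u in Set.Ioo (0:ℝ) 1, G i u * Λ u
        ≥ (n.factorial : ℝ) ^ 2 * (-(1/2 : ℝ) * J ^ n) := by
    intro G hGm hG01
    have hprod : (∏ i ∈ Finset.Icc 1 n, ∫ u in Set.Ioo (0:ℝ) 1, G i u * Λ u) ≤ J ^ n := by
      calc (∏ i ∈ Finset.Icc 1 n, ∫ u in Set.Ioo (0:ℝ) 1, G i u * Λ u)
          ≤ ∏ _i ∈ Finset.Icc 1 n, J :=
            Finset.prod_le_prod (fun i _ => (hkey (G i) (hGm i) (hG01 i)).1)
              (fun i _ => (hkey (G i) (hGm i) (hG01 i)).2)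
        _ = J ^ n := by simp [Finset.prod_const, Nat.card_Icc]
    have := mul_le_mul_of_nonneg_left hprod hN
    linarith
  refine ⟨?_, ?_⟩
  · exact main (fun i u => (1 - u) ^ (2 * i - 2))
      (fun i => (measurable_const.sub measurable_id).pow_const _)
      (fun i u hu => ⟨pow_nonneg (by linarith [hu.2]) _,
        pow_le_one₀ (by linarith [hu.2]) (by linarith [hu.1])⟩)
  · exact main (fun i u => u ^ (2 * i - 2))
      (fun i => measurable_id.pow_const _)
      (fun i u hu => ⟨pow_nonneg (le_of_lt hu.1) _,
        pow_le_one₀ hu.1.le hu.2.le⟩)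
end

section
/- If X has mode m with 0 ≤ f(x) ≤ M for all x and 0 ≤ w(x) ≤ k, then J^w(X_minRSSU^(n)) ≥ -((n!)² kⁿ Mⁿ)/(2·(2n-1)!!) and J^w(X_maxRSSU^(n)) ≥ -((n!)² kⁿ Mⁿ)/(2·(2n-1)!!), where (2n-1)!! = ∏_{i=1}^n (2i-1). -/
open MeasureTheory

lemma int_pow_Ioo (m : ℕ) : ∫ u in Set.Ioo (0:ℝ) 1, u ^ m = 1/((m:ℝ)+1) := by
  rw [← integral_Ioc_eq_integral_Ioo, ← intervalIntegral.integral_of_le zero_le_one,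
    integral_pow]
  simp

lemma int_pow_Ioo' (m : ℕ) : ∫ u in Set.Ioo (0:ℝ) 1, (1-u) ^ m = 1/((m:ℝ)+1) := by
  rw [← integral_Ioc_eq_integral_Ioo, ← intervalIntegral.integral_of_le zero_le_one]
  have h := intervalIntegral.integral_comp_sub_left (a := (0:ℝ)) (b := 1) (fun x => x ^ m) 1
  simp only [sub_zero, sub_self] at h
  rw [h, integral_pow]
  simp

lemma gwj_aux_s19 (n : ℕ) (f Finv w : ℝ → ℝ) (M k : ℝ)
    (hf0 : ∀ x, 0 ≤ f x) (hfM : ∀ x, f x ≤ M)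
    (hw0 : ∀ x, 0 ≤ w x) (hwk : ∀ x, w x ≤ k)
    (p : ℕ → ℝ → ℝ)
    (hp0 : ∀ i u, 0 ≤ p i u)
    (hpc : ∀ i, Continuous (p i))
    (hpint : ∀ i ∈ Finset.Icc 1 n, ∫ u in Set.Ioo (0:ℝ) 1, p i u = 1/(2*(i:ℝ)-1)) :
    -((n.factorial : ℝ) ^ 2 / 2) * ∏ i ∈ Finset.Icc 1 n,
        (∫ u in Set.Ioo (0:ℝ) 1, p i u * (w (Finv u) * f (Finv u)))
      ≥ -((n.factorial : ℝ) ^ 2 * k ^ n * M ^ n) /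
          (2 * ∏ i ∈ Finset.Icc 1 n, (2 * (i:ℝ) - 1)) := by
  have hM : 0 ≤ M := le_trans (hf0 0) (hfM 0)
  have hk : 0 ≤ k := le_trans (hw0 0) (hwk 0)
  have hwf : ∀ u, 0 ≤ w (Finv u) * f (Finv u) := fun u => mul_nonneg (hw0 _) (hf0 _)
  have hwfkM : ∀ u : ℝ, w (Finv u) * f (Finv u) ≤ k * M := fun u =>
    mul_le_mul (hwk _) (hfM _) (hf0 _) hk
  have hD : ∀ i ∈ Finset.Icc 1 n, (0:ℝ) < 2*(i:ℝ)-1 := by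
    intro i hi
    simp only [Finset.mem_Icc] at hi
    have : (1:ℝ) ≤ i := by exact_mod_cast hi.1
    linarith
  have hbound : ∀ i ∈ Finset.Icc 1 n,
      (∫ u in Set.Ioo (0:ℝ) 1, p i u * (w (Finv u) * f (Finv u))) ≤ k*M/(2*(i:ℝ)-1) := by
    intro i hi
    have hInt : IntegrableOn (fun u => p i u * (k*M)) (Set.Ioo (0:ℝ) 1) :=
      (((hpc i).mul continuous_const).integrableOn_Icc (a := 0) (b := 1)).mono_set
        Set.Ioo_subset_Icc_self
    calc (∫ u in Set.Ioo (0:ℝ) 1, p i u * (w (Finv u) * f (Finv u)))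
        ≤ ∫ u in Set.Ioo (0:ℝ) 1, p i u * (k*M) := by
          apply integral_mono_of_nonneg
          · exact Filter.Eventually.of_forall fun u => mul_nonneg (hp0 i u) (hwf u)
          · exact hInt
          · exact Filter.Eventually.of_forall fun u =>
              mul_le_mul_of_nonneg_left (hwfkM u) (hp0 i u)
      _ = k*M/(2*(i:ℝ)-1) := by
          rw [integral_mul_const, hpint i hi]; ring
  have hnonneg : ∀ i ∈ Finset.Icc 1 n,
      0 ≤ (∫ u in Set.Ioo (0:ℝ) 1, p i u * (w (Finv u) * f (Finv u))) :=
    fun i _ => integral_nonneg fun u => mul_nonneg (hp0 i u) (hwf u)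
  have hprod : (∏ i ∈ Finset.Icc 1 n, ∫ u in Set.Ioo (0:ℝ) 1, p i u * (w (Finv u) * f (Finv u)))
      ≤ ∏ i ∈ Finset.Icc 1 n, k*M/(2*(i:ℝ)-1) :=
    Finset.prod_le_prod hnonneg hbound
  have hDpos : 0 < ∏ i ∈ Finset.Icc 1 n, (2*(i:ℝ)-1) := Finset.prod_pos hD
  have hprodval : (∏ i ∈ Finset.Icc 1 n, k*M/(2*(i:ℝ)-1))
      = k^n * M^n / ∏ i ∈ Finset.Icc 1 n, (2*(i:ℝ)-1) := by
    rw [Finset.prod_div_distrib, Finset.prod_const, Nat.card_Icc, mul_pow]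
    norm_num
  rw [ge_iff_le]
  have heq : -((n.factorial:ℝ)^2 * k^n * M^n) / (2 * ∏ i ∈ Finset.Icc 1 n, (2*(i:ℝ)-1))
      = -((n.factorial:ℝ)^2/2) * (k^n*M^n / ∏ i ∈ Finset.Icc 1 n, (2*(i:ℝ)-1)) := by
    field_simp
  rw [heq]
  exact mul_le_mul_of_nonpos_left (hprod.trans_eq hprodval)
    (neg_nonpos.mpr (by positivity))

/-- If 0 ≤ f ≤ M and 0 ≤ w ≤ k, then
J^w(X_minRSSU^(n)) ≥ -((n!)² kⁿ Mⁿ)/(2 (2n-1)!!) and likewise for maxRSSU,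
where (2n-1)!! = ∏_{i=1}^n (2i-1). -/
theorem gwj_mode_bound
    (n : ℕ) (f Finv w : ℝ → ℝ) (M k : ℝ)
    (hf0 : ∀ x, 0 ≤ f x) (hfM : ∀ x, f x ≤ M)
    (hw0 : ∀ x, 0 ≤ w x) (hwk : ∀ x, w x ≤ k) :
    (-((n.factorial : ℝ) ^ 2 / 2) * ∏ i ∈ Finset.Icc 1 n,
        ∫ u in Set.Ioo (0:ℝ) 1, (1 - u) ^ (2 * i - 2) * (w (Finv u) * f (Finv u))
      ≥ -((n.factorial : ℝ) ^ 2 * k ^ n * M ^ n) /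
          (2 * ∏ i ∈ Finset.Icc 1 n, (2 * (i:ℝ) - 1)))
    ∧
    (-((n.factorial : ℝ) ^ 2 / 2) * ∏ i ∈ Finset.Icc 1 n,
        ∫ u in Set.Ioo (0:ℝ) 1, u ^ (2 * i - 2) * (w (Finv u) * f (Finv u))
      ≥ -((n.factorial : ℝ) ^ 2 * k ^ n * M ^ n) /
          (2 * ∏ i ∈ Finset.Icc 1 n, (2 * (i:ℝ) - 1))) := by
  have hcast : ∀ i ∈ Finset.Icc 1 n, (1:ℝ)/(((2*i-2:ℕ):ℝ)+1) = 1/(2*(i:ℝ)-1) := by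
    intro i hi
    have h1 : (1:ℕ) ≤ i := (Finset.mem_Icc.mp hi).1
    have h2 : (2:ℕ) ≤ 2*i := by omega
    rw [Nat.cast_sub h2]
    push_cast
    ring_nf
  constructor
  · exact gwj_aux_s19 n f Finv w M k hf0 hfM hw0 hwk (fun i u => (1-u)^(2*i-2))
      (fun i u => Even.pow_nonneg ⟨i-1, by omega⟩ _)
      (fun i => by fun_prop)
      (fun i hi => by rw [int_pow_Ioo']; exact hcast i hi)
  · exact gwj_aux_s19 n f Finv w M k hf0 hfM hw0 hwk (fun i u => u^(2*i-2))
      (fun i u => Even.pow_nonneg ⟨i-1, by omega⟩ _)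
      (fun i => by fun_prop)
      (fun i hi => by rw [int_pow_Ioo]; exact hcast i hi)
end
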